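/- Trace equivalence, cost equivalence, and termination equivalence are congruences on the operational model of Imp²: each of these three two-sorted equivalence relations on (𝖱, 𝖶) is compatible with all constructors of Imp² (sequential composition p;q and while e p of readers, the writer constructors [p]_s, s.c, ret_s, and c;q). -/

import Mathlib

/-! # Statement 10: trace, cost, and termination equivalence are congruences on the operational model of Imp² -/
namespace ImpLang

/-- Arithmetic expressions over the variable set `ℕ`. -/
inductive Ex : Type
  | const : ℤ → Ex
  | var : ℕ → Ex
  | add : Ex → Ex → Ex
  | sub : Ex → Ex → Ex
  | mul : Ex → Ex → Ex

/-- Variable stores. -/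
abbrev Store := ℕ → ℤ

/-- Expression evaluation. -/
def eev : Ex → Store → ℤ
  | .const n, _ => n
  | .var x, s => s x
  | .add e₁ e₂, s => eev e₁ s + eev e₂ s
  | .sub e₁ e₂, s => eev e₁ s - eev e₂ s
  | .mul e₁ e₂, s => eev e₁ s * eev e₂ s

/-- Store update `s[x := n]`. -/
def upd (s : Store) (x : ℕ) (n : ℤ) : Store := fun y => if y = x then n else s y

/-- Imp program terms. -/
inductive P : Type
  | skip : P
  | assign : ℕ → Ex → P
  | whileE : Ex → P → P
  | seq : P → P → P

/-- The deterministic small-step operational semantics of Imp: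
`step p s = .inl (p', s')` means `p,s → p',s'`, and `step p s = .inr s'` means
`p,s ↓ s'`. -/
def step : P → Store → (P × Store) ⊕ Store
  | .skip, s => .inr s
  | .assign x e, s => .inr (upd s x (eev e s))
  | .whileE e p, s =>
      if eev e s = 0 then .inr s else .inl (.seq p (.whileE e p), s)
  | .seq p q, s =>
      match step p s with
      | .inl (p', s') => .inl (.seq p' q, s')
      | .inr s' => .inl (q, s')

/-- Iterated execution of the small-step semantics: `runF c n` is the configuration
reached after `n` steps from `c` (a running configuration `.inl (p,s)` or a
terminated one `.inr s'`), and `none` if the execution stopped strictly before. -/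
def runF : (P × Store) ⊕ Store → ℕ → Option ((P × Store) ⊕ Store)
  | c, 0 => some c
  | c, n+1 =>
      match runF c n with
      | some (.inl (p, s)) => some (step p s)
      | _ => none

/-- The trace map of Imp, encoding the (nonempty, finite or infinite) sequence
`trc(p)(s) ∈ 𝒮^∞` as a function `ℕ → Option (Store ⊕ Store)`: the `n`-th entry is
`some (.inl sₙ)` for an intermediate store produced by a transition `→`,
`some (.inr s')` for the final store produced by `↓`, and `none` beyond the end of a
finite trace. Thus a finite trace `(s₁,…,sₙ,s')` is the function sending
`0,…,n-1` to `some (.inl sᵢ₊₁)`, `n` to `some (.inr s')` and everything else to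
`none`, and an infinite trace `(s₁,s₂,…)` is the function sending each `n` to
`some (.inl sₙ₊₁)`. -/
def trc (p : P) (s : Store) : ℕ → Option (Store ⊕ Store) := fun n =>
  match runF (.inl (p, s)) (n+1) with
  | some (.inl (_, s')) => some (.inl s')
  | some (.inr s') => some (.inr s')
  | none => none

open Classical in
/-- The cost map of Imp: `cst p s = some (n, s')` iff `trc p s = (s₁,…,sₙ,s')` is
finite, and `cst p s = none` (the element `*`) iff `trc p s` is infinite. -/
noncomputable def cst (p : P) (s : Store) : Option (ℕ × Store) :=
  if h : ∃ ns : ℕ × Store, trc p s ns.1 = some (.inr ns.2) then some h.choose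
  else none

/-- The termination map of Imp: `ter p s = some s'` iff `trc p s` is finite with
last element `s'`, and `ter p s = none` (the element `*`) iff `trc p s` is
infinite. -/
noncomputable def ter (p : P) (s : Store) : Option Store := (cst p s).map Prod.snd

end ImpLang
namespace RW

/-- A deterministic reader–writer transition system over a state set `S`:
`rstep p s = c` means `p,s → c`; `wstep c = .inl (d,s)` means `c →ˢ d`;
`wstep c = .inr (.inl d)` means `c → d`; `wstep c = .inr (.inr s)` means `c ↓ s`. -/
structure DRW (S : Type) where
  Rd : Type
  Wr : Type
  rstep : Rd → S → Wr
  wstep : Wr → (Wr × S) ⊕ (Wr ⊕ S)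

variable {S : Type}

/-- The output transition `c →ˢ d`. -/
def OutTr (M : DRW S) (c : M.Wr) (s : S) (d : M.Wr) : Prop := M.wstep c = .inl (d, s)

/-- The silent transition `c → d`. -/
def TauTr (M : DRW S) (c d : M.Wr) : Prop := M.wstep c = .inr (.inl d)

/-- The termination transition `c ↓ s`. -/
def DownTr (M : DRW S) (c : M.Wr) (s : S) : Prop := M.wstep c = .inr (.inr s)

/-- The weak silent transition `c ⇒ d`: a finite chain of silent steps. -/
def WSil (M : DRW S) : M.Wr → M.Wr → Prop := Relation.ReflTransGen (TauTr M)

/-- The weak output transition `c ⇒ˢ d`: `c ⇒ c' →ˢ d` for some `c'`. -/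
def WOut (M : DRW S) (c : M.Wr) (s : S) (d : M.Wr) : Prop :=
  ∃ c', WSil M c c' ∧ OutTr M c' s d

/-- The weak termination transition `c ⇓ s`: `c ⇒ c' ↓ s` for some `c'`. -/
def WDone (M : DRW S) (c : M.Wr) (s : S) : Prop :=
  ∃ c', WSil M c c' ∧ DownTr M c' s

/-- `ReachL M c l d`: from `c` there is a chain of weak output transitions
producing the list `l` of states and ending in `d`. -/
def ReachL (M : DRW S) : M.Wr → List S → M.Wr → Prop
  | c, [], d => c = d
  | c, s :: l, d => ∃ c', WOut M c s c' ∧ ReachL M c' l d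

/-- `TrcEntry M c n v` holds iff the `n`-th entry (0-indexed) of the trace
`trc^w(c)` is `v`, where `v = .inl s` tags an intermediate output state and
`v = .inr s` tags the final state of a finite trace. -/
def TrcEntry (M : DRW S) (c : M.Wr) (n : ℕ) (v : S ⊕ S) : Prop :=
  (∃ l d s d', ReachL M c l d ∧ l.length = n ∧ WOut M d s d' ∧ v = .inl s) ∨
  (∃ l d s, ReachL M c l d ∧ l.length = n ∧ WDone M d s ∧ v = .inr s)

open Classical in
/-- The writer trace map `trc^w : X_w → 𝒮^∞`, with a (nonempty, finite or infinite)
trace encoded as a function `ℕ → Option (S ⊕ S)`: a finite trace `(s₁,…,sₙ,s)`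
sends `0,…,n-1` to `some (.inl sᵢ₊₁)`, `n` to `some (.inr s)` and all larger
numbers to `none`; an infinite trace `(s₁,s₂,…)` sends each `n` to
`some (.inl sₙ₊₁)`. -/
noncomputable def trcW (M : DRW S) (c : M.Wr) : ℕ → Option (S ⊕ S) := fun n =>
  if h : ∃ v, TrcEntry M c n v then some h.choose else none

/-- The reader trace map `trc^r : X_r → (𝒮^∞)^𝒮`: `trc^r(p)(s) = trc^w(c)` where
`p,s → c`. -/
noncomputable def trcR (M : DRW S) (p : M.Rd) (s : S) : ℕ → Option (S ⊕ S) :=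
  trcW M (M.rstep p s)

open Classical in
/-- The writer cost map: `cstW M c = some (n,s)` iff `trc^w(c) = (s₁,…,sₙ,s)` is
finite, and `none` (i.e. `*`) iff `trc^w(c)` is infinite. -/
noncomputable def cstW (M : DRW S) (c : M.Wr) : Option (ℕ × S) :=
  if h : ∃ ns : ℕ × S, trcW M c ns.1 = some (.inr ns.2) then some h.choose else none

/-- The reader cost map. -/
noncomputable def cstR (M : DRW S) (p : M.Rd) (s : S) : Option (ℕ × S) :=
  cstW M (M.rstep p s)

/-- The writer termination map: the last element of a finite trace, `none` (`*`)
for an infinite trace. -/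
noncomputable def terW (M : DRW S) (c : M.Wr) : Option S := (cstW M c).map Prod.snd

/-- The reader termination map. -/
noncomputable def terR (M : DRW S) (p : M.Rd) (s : S) : Option S :=
  (cstR M p s).map Prod.snd

end RW
namespace ImpLang

/-- Writers of the two-sorted language Imp². Readers are exactly the Imp terms `P`. -/
inductive W : Type
  /-- The writer `[p]_s`. -/
  | run : P → Store → W
  /-- The writer `s.c`. -/
  | out : Store → W → W
  /-- The writer `ret_s`. -/
  | ret : Store → W
  /-- The writer `c ; q`. -/
  | seqW : W → P → W

/-- The reader semantics of Imp²: `rstep2 p s` is the unique writer `c` with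
`p,s → c`. -/
def rstep2 : P → Store → W
  | .seq p q, s => .seqW (.run p s) q
  | .skip, s => .ret s
  | .assign x e, s => .ret (upd s x (eev e s))
  | .whileE e p, s =>
      if eev e s = 0 then .ret s
      else .out s (.run (.seq p (.whileE e p)) s)

/-- The writer semantics of Imp²: `wstep2 c = .inl (d,s)` means `c →ˢ d`,
`wstep2 c = .inr (.inl d)` means `c → d`, and `wstep2 c = .inr (.inr s)` means
`c ↓ s`. -/
def wstep2 : W → (W × Store) ⊕ (W ⊕ Store)
  | .run p s => .inr (.inl (rstep2 p s))
  | .ret s => .inr (.inr s)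
  | .out s c => .inl (c, s)
  | .seqW c q =>
      match wstep2 c with
      | .inl (d, s) => .inl (.seqW d q, s)
      | .inr (.inl d) => .inr (.inl (.seqW d q))
      | .inr (.inr s') => .inl (.run q s', s')

/-- The operational model of Imp² as a deterministic reader–writer transition
system. -/
def Imp2 : RW.DRW Store where
  Rd := P
  Wr := W
  rstep := rstep2
  wstep := wstep2

end ImpLang

namespace ImpLang

open RW

/-- A two-sorted relation on `(𝖱, 𝖶)` is a congruence if it is compatible with all
constructors of Imp²: sequential composition and while loops of readers, and the
writer constructors `[p]_s`, `s.c`, `ret_s` and `c ; q`. -/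
def IsCongr (Er : P → P → Prop) (Ew : W → W → Prop) : Prop :=
  (∀ p p' q q', Er p p' → Er q q' → Er (.seq p q) (.seq p' q')) ∧
  (∀ (e : Ex) p p', Er p p' → Er (.whileE e p) (.whileE e p')) ∧
  (∀ (s : Store) p p', Er p p' → Ew (.run p s) (.run p' s)) ∧
  (∀ (s : Store) c c', Ew c c' → Ew (.out s c) (.out s c')) ∧
  (∀ s : Store, Ew (.ret s) (.ret s)) ∧
  (∀ c c' q q', Ew c c' → Er q q' → Ew (.seqW c q) (.seqW c' q'))

/-! ## Auxiliary machinery -/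

/-- The first observable of a reader configuration. -/
def obsR : P → Store → (W × Store) ⊕ Store
  | .skip, s => .inr s
  | .assign x e, s => .inr (upd s x (eev e s))
  | .whileE e p, s =>
      if eev e s = 0 then .inr s else .inl (.run (.seq p (.whileE e p)) s, s)
  | .seq p q, s =>
      match obsR p s with
      | .inl (d, s') => .inl (.seqW d q, s')
      | .inr s' => .inl (.run q s', s')

/-- The first observable of a writer: the output transition or termination reached
after finitely many silent steps. -/
def obsW : W → (W × Store) ⊕ Store
  | .run p s => obsR p s
  | .ret s => .inr s
  | .out s c => .inl (c, s)
  | .seqW c q =>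
      match obsW c with
      | .inl (d, s) => .inl (.seqW d q, s)
      | .inr s' => .inl (.run q s', s')

/-- The concrete trace of a writer, obtained by iterating `obsW`. -/
def itr : W → ℕ → Option (Store ⊕ Store)
  | c, 0 =>
      match obsW c with
      | .inl (_, s) => some (.inl s)
      | .inr s => some (.inr s)
  | c, n+1 =>
      match obsW c with
      | .inl (d, _) => itr d n
      | .inr _ => none

lemma obs_rstep (p : P) (s : Store) : obsW (rstep2 p s) = obsR p s := by
  cases p with
  | skip => rfl
  | assign x e => rfl
  | whileE e p =>
      simp only [rstep2, obsR]
      split <;> rfl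
  | seq p q => rfl

lemma itr_congr {c c' : W} (h : obsW c = obsW c') : ∀ n, itr c n = itr c' n := by
  intro n
  cases n <;> simp only [itr, h]

lemma silent_obs : ∀ {c d : W}, wstep2 c = .inr (.inl d) → obsW c = obsW d := by
  intro c
  induction c with
  | run p s =>
      intro d h
      simp only [wstep2, Sum.inr.injEq, Sum.inl.injEq] at h
      subst h
      rw [obs_rstep]; rfl
  | ret s => intro d h; simp [wstep2] at h
  | out s c => intro d h; simp [wstep2] at h
  | seqW c q ih =>
      intro d h
      simp only [wstep2] at h
      rcases hw : wstep2 c with ⟨d', s⟩ | d' | s' <;> rw [hw] at h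
      · simp at h
      · simp only [Sum.inr.injEq, Sum.inl.injEq] at h
        subst h
        simp only [obsW, ih hw]
      · exact absurd h (by simp)
lemma stop_obs_out : ∀ {c d : W} {s : Store}, wstep2 c = .inl (d, s) → obsW c = .inl (d, s) := by
  intro c
  induction c with
  | run p s => intro d t h; simp [wstep2] at h
  | ret s => intro d t h; simp [wstep2] at h
  | out s c => intro d t h; simpa [wstep2, obsW] using h
  | seqW c q ih =>
      intro d t h
      simp only [wstep2] at h
      rcases hw : wstep2 c with ⟨d', s'⟩ | d' | s' <;> rw [hw] at h
      · simp only [Sum.inl.injEq, Prod.mk.injEq] at h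
        obtain ⟨h1, h2⟩ := h
        subst h1; subst h2
        simp only [obsW, ih hw]
      · simp at h
      · simp only [Sum.inl.injEq, Prod.mk.injEq] at h
        obtain ⟨h1, h2⟩ := h
        subst h1; subst h2
        have : obsW c = .inr s' := by
          clear ih
          induction c with
          | run p s => simp [wstep2] at hw
          | ret s => simpa [wstep2, obsW] using hw
          | out s c => simp [wstep2] at hw
          | seqW c q ih =>
              simp only [wstep2] at hw
              rcases hw2 : wstep2 c with ⟨d2, s2⟩ | d2 | s2 <;> rw [hw2] at hw <;> simp at hw
        simp only [obsW, this]

lemma stop_obs_down : ∀ {c : W} {s : Store}, wstep2 c = .inr (.inr s) → obsW c = .inr s := by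
  intro c
  induction c with
  | run p s => intro t h; simp [wstep2] at h
  | ret s => intro t h; simpa [wstep2, obsW] using h
  | out s c => intro t h; simp [wstep2] at h
  | seqW c q ih =>
      intro t h
      simp only [wstep2] at h
      rcases hw : wstep2 c with ⟨d', s'⟩ | d' | s' <;> rw [hw] at h <;> simp at h

lemma wsil_obs {c d : W} (h : WSil Imp2 c d) : obsW c = obsW d := by
  induction h with
  | refl => rfl
  | tail _ h2 ih => exact ih.trans (silent_obs h2)

lemma tauTr_seqW {c d : W} (q : P) (h : TauTr Imp2 c d) : TauTr Imp2 (.seqW c q) (.seqW d q) := by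
  have h' : wstep2 c = .inr (.inl d) := h
  show wstep2 (.seqW c q) = .inr (.inl (.seqW d q))
  simp only [wstep2, h']

lemma wsil_seqW {c d : W} (q : P) (h : WSil Imp2 c d) : WSil Imp2 (.seqW c q) (.seqW d q) := by
  induction h with
  | refl => exact Relation.ReflTransGen.refl
  | tail _ h2 ih => exact ih.tail (tauTr_seqW q h2)

/-- Every writer reaches, after finitely many silent steps, a configuration whose
step realizes its first observable. -/
lemma reaches : ∀ c : W, ∃ c', WSil Imp2 c c' ∧
    wstep2 c' = Sum.elim (fun ds => .inl ds) (fun s => .inr (.inr s)) (obsW c) := by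
  have key : ∀ (p : P) (s : Store), ∃ c', WSil Imp2 (.run p s) c' ∧
      wstep2 c' = Sum.elim (fun ds => .inl ds) (fun s => .inr (.inr s)) (obsR p s) := by
    intro p
    induction p with
    | skip =>
        intro s
        refine ⟨.ret s, Relation.ReflTransGen.single ?_, rfl⟩
        show wstep2 (.run .skip s) = .inr (.inl (.ret s)); rfl
    | assign x e =>
        intro s
        refine ⟨.ret (upd s x (eev e s)), Relation.ReflTransGen.single ?_, rfl⟩
        show wstep2 _ = .inr (.inl (.ret (upd s x (eev e s)))); rfl
    | whileE e p ih =>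
        intro s
        by_cases h : eev e s = 0
        · refine ⟨.ret s, Relation.ReflTransGen.single ?_, ?_⟩
          · show wstep2 (.run (.whileE e p) s) = .inr (.inl (.ret s))
            simp [wstep2, rstep2, h]
          · simp [obsR, h, wstep2]
        · refine ⟨.out s (.run (.seq p (.whileE e p)) s), Relation.ReflTransGen.single ?_, ?_⟩
          · show wstep2 (.run (.whileE e p) s) = .inr (.inl _)
            simp [wstep2, rstep2, h]
          · simp [obsR, h, wstep2]
    | seq p q ih ih2 =>
        intro s
        obtain ⟨c', hsil, hstep⟩ := ih s
        have step1 : TauTr Imp2 (.run (.seq p q) s) (.seqW (.run p s) q) := by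
          show wstep2 _ = _; rfl
        refine ⟨.seqW c' q, (Relation.ReflTransGen.single step1).trans (wsil_seqW q hsil), ?_⟩
        rcases ho : obsR p s with ⟨d, s'⟩ | s' <;> rw [ho] at hstep <;>
          simp only [Sum.elim_inl, Sum.elim_inr] at hstep <;>
          simp [wstep2, hstep, obsR, ho]
  intro c
  induction c with
  | run p s => exact key p s
  | ret s => exact ⟨.ret s, Relation.ReflTransGen.refl, rfl⟩
  | out s c => exact ⟨.out s c, Relation.ReflTransGen.refl, rfl⟩
  | seqW c q ih =>
      obtain ⟨c', hsil, hstep⟩ := ih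
      refine ⟨.seqW c' q, wsil_seqW q hsil, ?_⟩
      rcases ho : obsW c with ⟨d, s'⟩ | s' <;> rw [ho] at hstep <;>
        simp only [Sum.elim_inl, Sum.elim_inr] at hstep <;>
        simp [wstep2, hstep, obsW, ho]

lemma wout_iff {c d : W} {s : Store} : WOut Imp2 c s d ↔ obsW c = .inl (d, s) := by
  constructor
  · rintro ⟨c', hsil, hstep⟩
    rw [wsil_obs hsil]
    exact stop_obs_out hstep
  · intro h
    obtain ⟨c', hsil, hstep⟩ := reaches c
    rw [h] at hstep
    exact ⟨c', hsil, hstep⟩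

lemma wdone_iff {c : W} {s : Store} : WDone Imp2 c s ↔ obsW c = .inr s := by
  constructor
  · rintro ⟨c', hsil, hstep⟩
    rw [wsil_obs hsil]
    exact stop_obs_down hstep
  · intro h
    obtain ⟨c', hsil, hstep⟩ := reaches c
    rw [h] at hstep
    exact ⟨c', hsil, hstep⟩
lemma reach_itr : ∀ (l : List Store) (c d : W), ReachL Imp2 c l d →
    ∀ k, itr c (l.length + k) = itr d k := by
  intro l
  induction l with
  | nil => intro c d h k; cases h; simp
  | cons s l ih =>
      rintro c d ⟨c', hout, hreach⟩ k
      have ho : obsW c = .inl (c', s) := wout_iff.mp hout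
      have : l.length + 1 + k = (l.length + k) + 1 := by omega
      rw [List.length_cons, this]
      simp only [itr, ho]
      exact ih c' d hreach k

lemma trcEntry_iff {c : W} {n : ℕ} {v : Store ⊕ Store} :
    TrcEntry Imp2 c n v ↔ itr c n = some v := by
  constructor
  · rintro (⟨l, d, s, d', hreach, hlen, hout, hv⟩ | ⟨l, d, s, hreach, hlen, hdone, hv⟩)
    · subst hv
      have := reach_itr l c d hreach 0
      rw [← hlen, ← Nat.add_zero l.length, this]
      simp [itr, wout_iff.mp hout]
    · subst hv
      have := reach_itr l c d hreach 0
      rw [← hlen, ← Nat.add_zero l.length, this]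
      simp [itr, wdone_iff.mp hdone]
  · intro h
    induction n generalizing c with
    | zero =>
        rcases ho : obsW c with ⟨d, s⟩ | s <;> rw [itr, ho] at h
        · left
          exact ⟨[], c, s, d, rfl, rfl, wout_iff.mpr ho, (Option.some.injEq _ _ ▸ h).symm⟩
        · right
          exact ⟨[], c, s, rfl, rfl, wdone_iff.mpr ho, (Option.some.injEq _ _ ▸ h).symm⟩
    | succ n ihn =>
        rcases ho : obsW c with ⟨d, s⟩ | s <;> rw [itr, ho] at h
        · rcases ihn h with ⟨l, d2, s2, d2', hreach, hlen, hout, hv⟩ |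
            ⟨l, d2, s2, hreach, hlen, hdone, hv⟩
          · exact Or.inl ⟨s :: l, d2, s2, d2', ⟨d, wout_iff.mpr ho, hreach⟩,
              by simp [hlen], hout, hv⟩
          · exact Or.inr ⟨s :: l, d2, s2, ⟨d, wout_iff.mpr ho, hreach⟩,
              by simp [hlen], hdone, hv⟩
        · exact absurd h (by simp)

lemma trcW_eq (c : W) : trcW Imp2 c = itr c := by
  funext n
  unfold trcW
  split
  case isTrue h =>
    have := h.choose_spec
    rw [trcEntry_iff] at this
    exact this.symm
  case isFalse h =>
    rcases hi : itr c n with _ | v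
    · rfl
    · exact absurd ⟨v, trcEntry_iff.mpr hi⟩ h

lemma trcR_eq (p : P) (s : Store) : trcR Imp2 p s = itr (.run p s) := by
  show trcW Imp2 (rstep2 p s) = _
  rw [trcW_eq]
  funext n
  exact itr_congr (by rw [obs_rstep]; rfl) n
/-! ### Trace congruence lemmas -/

lemma itr_zero_inl {c : W} {d : W} {s : Store} (h : obsW c = .inl (d, s)) :
    itr c 0 = some (.inl s) := by simp [itr, h]

lemma itr_zero_inr {c : W} {s : Store} (h : obsW c = .inr s) :
    itr c 0 = some (.inr s) := by simp [itr, h]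

lemma itr_shift {c d : W} {s : Store} (h : obsW c = .inl (d, s)) (n : ℕ) :
    itr c (n + 1) = itr d n := by simp [itr, h]

/-- Bounded congruence of `itr` for sequential writer composition. -/
lemma itr_seqW_congr' {q q' : P} : ∀ (n : ℕ) (c c' : W), itr c = itr c' →
    (∀ s k, k < n → itr (.run q s) k = itr (.run q' s) k) →
    itr (.seqW c q) n = itr (.seqW c' q') n := by
  intro n
  induction n with
  | zero =>
      intro c c' hc _
      rcases ho : obsW c with ⟨d, s⟩ | s <;>
        rcases ho' : obsW c' with ⟨d', s'⟩ | s'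
      all_goals
        have h0 : itr c 0 = itr c' 0 := by rw [hc]
        simp only [itr, ho, ho'] at h0 ⊢
      all_goals simp_all [obsW]
  | succ n ih =>
      intro c c' hc hq
      rcases ho : obsW c with ⟨d, s⟩ | s <;>
        rcases ho' : obsW c' with ⟨d', s'⟩ | s'
      all_goals
        have h0 : itr c 0 = itr c' 0 := by rw [hc]
        simp only [itr, ho, ho'] at h0
      · -- both step
        have hd : itr d = itr d' := by
          funext k
          have := congrFun hc (k + 1)
          rwa [itr_shift ho, itr_shift ho'] at this
        have : obsW (W.seqW c q) = .inl (.seqW d q, s) := by simp [obsW, ho]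
        have h2 : obsW (W.seqW c' q') = .inl (.seqW d' q', s') := by simp [obsW, ho']
        rw [itr_shift this, itr_shift h2]
        exact ih d d' hd (fun s k hk => hq s k (Nat.lt_succ_of_lt hk))
      · simp at h0
      · simp at h0
      · -- both done
        simp only [Option.some.injEq, Sum.inr.injEq] at h0
        subst h0
        have : obsW (W.seqW c q) = .inl (.run q s, s) := by simp [obsW, ho]
        have h2 : obsW (W.seqW c' q') = .inl (.run q' s, s) := by simp [obsW, ho']
        rw [itr_shift this, itr_shift h2]
        exact hq s n (Nat.lt_succ_self n)

lemma itr_seqW_congr {q q' : P} (c c' : W) (hc : itr c = itr c')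
    (hq : ∀ s, itr (.run q s) = itr (.run q' s)) :
    itr (.seqW c q) = itr (.seqW c' q') := by
  funext n
  exact itr_seqW_congr' n c c' hc (fun s k _ => congrFun (hq s) k)

lemma obs_run_seq (p q : P) (s : Store) :
    obsW (.run (.seq p q) s) = obsW (.seqW (.run p s) q) := by
  show obsR (.seq p q) s = _
  simp only [obsR, obsW]

lemma itr_while_congr {e : Ex} {p p' : P}
    (hp : ∀ s, itr (.run p s) = itr (.run p' s)) :
    ∀ n s, itr (.run (.whileE e p) s) n = itr (.run (.whileE e p') s) n := by
  intro n
  induction n using Nat.strong_induction_on with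
  | _ n ih =>
      intro s
      by_cases h0 : eev e s = 0
      · have h1 : obsW (W.run (.whileE e p) s) = .inr s := by
          show obsR _ _ = _; simp [obsR, h0]
        have h2 : obsW (W.run (.whileE e p') s) = .inr s := by
          show obsR _ _ = _; simp [obsR, h0]
        exact itr_congr (h1.trans h2.symm) n
      · have h1 : obsW (W.run (.whileE e p) s) = .inl (.run (.seq p (.whileE e p)) s, s) := by
          show obsR _ _ = _; simp [obsR, h0]
        have h2 : obsW (W.run (.whileE e p') s) = .inl (.run (.seq p' (.whileE e p')) s, s) := by
          show obsR _ _ = _; simp [obsR, h0]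
        cases n with
        | zero => rw [itr_zero_inl h1, itr_zero_inl h2]
        | succ m =>
            rw [itr_shift h1, itr_shift h2,
              itr_congr (obs_run_seq p (.whileE e p) s) m,
              itr_congr (obs_run_seq p' (.whileE e p') s) m]
            exact itr_seqW_congr' m _ _ (hp s)
              (fun t k hk => ih k (by omega) t)

lemma itr_out (s : Store) (c : W) : ∀ n, itr (.out s c) n =
    (match n with | 0 => some (.inl s) | n+1 => itr c n) := by
  intro n
  cases n <;> rfl
/-! ### Cost machinery -/

lemma itr_inr_unique : ∀ (n : ℕ) (c : W) (m : ℕ) {s t : Store},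
    itr c n = some (.inr s) → itr c m = some (.inr t) → n = m ∧ s = t := by
  intro n
  induction n with
  | zero =>
      intro c m s t h1 h2
      rcases ho : obsW c with ⟨d, u⟩ | u <;> rw [itr, ho] at h1 <;> simp at h1
      subst h1
      cases m with
      | zero => rw [itr_zero_inr ho] at h2; simp at h2; exact ⟨rfl, h2⟩
      | succ m => rw [itr, ho] at h2; simp at h2
  | succ n ih =>
      intro c m s t h1 h2
      rcases ho : obsW c with ⟨d, u⟩ | u <;> rw [itr, ho] at h1
      · cases m with
        | zero => rw [itr_zero_inl ho] at h2; simp at h2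
        | succ m =>
            rw [itr, ho] at h2
            obtain ⟨h3, h4⟩ := ih d m h1 h2
            exact ⟨by omega, h4⟩
      · simp at h1

lemma cstW_eq_some {c : W} {n : ℕ} {s : Store} :
    cstW Imp2 c = some (n, s) ↔ itr c n = some (.inr s) := by
  unfold cstW
  split
  case isTrue h =>
    have hs : itr c h.choose.1 = some (.inr h.choose.2) := by
      rw [← trcW_eq]; exact h.choose_spec
    constructor
    · intro he
      rw [Option.some.injEq] at he
      rw [he] at hs
      simpa using hs
    · intro hi
      obtain ⟨h1, h2⟩ := itr_inr_unique _ c n hs hi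
      rw [Option.some.injEq]
      exact Prod.ext h1 h2
  case isFalse h =>
    simp only [false_iff, (by simp : (none : Option (ℕ × Store)) ≠ some (n,s)), false_iff]
    intro hi
    exact h ⟨(n, s), by rw [trcW_eq]; exact hi⟩

lemma cstW_ext {c c' : W}
    (h : ∀ n s, itr c n = some (.inr s) ↔ itr c' n = some (.inr s)) :
    cstW Imp2 c = cstW Imp2 c' := by
  ext ⟨n, s⟩
  simp only [Option.mem_def, cstW_eq_some]
  exact h n s

lemma cstW_ext_iff {c c' : W} (h : cstW Imp2 c = cstW Imp2 c') :
    ∀ n s, itr c n = some (.inr s) ↔ itr c' n = some (.inr s) := by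
  intro n s
  rw [← cstW_eq_some, ← cstW_eq_some, h]

lemma cstR_eq_some {p : P} {s : Store} {n : ℕ} {t : Store} :
    cstR Imp2 p s = some (n, t) ↔ itr (.run p s) n = some (.inr t) := by
  show cstW Imp2 (rstep2 p s) = some (n, t) ↔ _
  rw [cstW_eq_some, itr_congr (c := rstep2 p s) (c' := .run p s) (by rw [obs_rstep]; rfl) n]

lemma seq_inr : ∀ (m : ℕ) (c : W) (q : P) (t : Store),
    itr (.seqW c q) m = some (.inr t) ↔
      ∃ n s k, itr c n = some (.inr s) ∧ itr (.run q s) k = some (.inr t) ∧ m = n + 1 + k := by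
  intro m
  induction m with
  | zero =>
      intro c q t
      constructor
      · intro h
        rcases ho : obsW c with ⟨d, u⟩ | u
        · rw [itr_zero_inl (show obsW (W.seqW c q) = .inl (.seqW d q, u) by simp [obsW, ho])] at h
          simp at h
        · rw [itr_zero_inl (show obsW (W.seqW c q) = .inl (.run q u, u) by simp [obsW, ho])] at h
          simp at h
      · rintro ⟨n, s, k, _, _, h⟩; omega
  | succ m ih =>
      intro c q t
      rcases ho : obsW c with ⟨d, u⟩ | u
      · rw [itr_shift (show obsW (W.seqW c q) = .inl (.seqW d q, u) by simp [obsW, ho]), ih]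
        constructor
        · rintro ⟨n, s, k, h1, h2, h3⟩
          exact ⟨n + 1, s, k, by rwa [itr_shift ho], h2, by omega⟩
        · rintro ⟨n, s, k, h1, h2, h3⟩
          cases n with
          | zero => rw [itr_zero_inl ho] at h1; simp at h1
          | succ n =>
              rw [itr_shift ho] at h1
              exact ⟨n, s, k, h1, h2, by omega⟩
      · rw [itr_shift (show obsW (W.seqW c q) = .inl (.run q u, u) by simp [obsW, ho])]
        constructor
        · intro h
          exact ⟨0, u, m, itr_zero_inr ho, h, by omega⟩
        · rintro ⟨n, s, k, h1, h2, h3⟩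
          cases n with
          | zero =>
              rw [itr_zero_inr ho] at h1
              simp at h1
              subst h1
              have : m = k := by omega
              rwa [this]
          | succ n => simp [itr, ho] at h1
lemma out_inr {s : Store} {c : W} {m : ℕ} {t : Store} :
    itr (.out s c) m = some (.inr t) ↔ ∃ k, itr c k = some (.inr t) ∧ m = k + 1 := by
  cases m with
  | zero =>
      rw [itr_zero_inl (show obsW (W.out s c) = .inl (c, s) from rfl)]
      simp
  | succ m =>
      rw [itr_shift (show obsW (W.out s c) = .inl (c, s) from rfl)]
      constructor
      · intro h; exact ⟨m, h, rfl⟩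
      · rintro ⟨k, h1, h2⟩
        obtain rfl : m = k := by omega
        exact h1

lemma while_inr {e : Ex} {p : P} {s : Store} {m : ℕ} {t : Store} :
    itr (.run (.whileE e p) s) m = some (.inr t) ↔
      (eev e s = 0 ∧ m = 0 ∧ t = s) ∨
      (eev e s ≠ 0 ∧ ∃ n u k, itr (.run p s) n = some (.inr u) ∧
        itr (.run (.whileE e p) u) k = some (.inr t) ∧ m = n + 2 + k) := by
  by_cases h0 : eev e s = 0
  · have h1 : obsW (W.run (.whileE e p) s) = .inr s := by
      show obsR _ _ = _; simp [obsR, h0]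
    cases m with
    | zero =>
        rw [itr_zero_inr h1]
        simp [h0]
        exact eq_comm
    | succ m =>
        simp [itr, h1, h0]
  · have h1 : obsW (W.run (.whileE e p) s) = .inl (.run (.seq p (.whileE e p)) s, s) := by
      show obsR _ _ = _; simp [obsR, h0]
    cases m with
    | zero =>
        rw [itr_zero_inl h1]
        simp [h0]
        omega
    | succ m =>
        rw [itr_shift h1, itr_congr (obs_run_seq p (.whileE e p) s) m, seq_inr]
        constructor
        · rintro ⟨n, u, k, hn, hk, hm⟩
          exact Or.inr ⟨h0, n, u, k, hn, hk, by omega⟩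
        · rintro (⟨h, -, -⟩ | ⟨-, n, u, k, hn, hk, hm⟩)
          · exact absurd h h0
          · exact ⟨n, u, k, hn, hk, by omega⟩

/-! ### Termination machinery -/

lemma terW_eq_some {c : W} {s : Store} :
    terW Imp2 c = some s ↔ ∃ n, itr c n = some (.inr s) := by
  unfold terW
  rw [Option.map_eq_some_iff]
  constructor
  · rintro ⟨⟨n, t⟩, h1, h2⟩
    cases h2
    exact ⟨n, cstW_eq_some.mp h1⟩
  · rintro ⟨n, hn⟩
    exact ⟨(n, s), cstW_eq_some.mpr hn, rfl⟩

lemma terW_ext {c c' : W}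
    (h : ∀ s, (∃ n, itr c n = some (.inr s)) ↔ (∃ n, itr c' n = some (.inr s))) :
    terW Imp2 c = terW Imp2 c' := by
  ext s
  simp only [Option.mem_def, terW_eq_some]
  exact h s

lemma terW_ext_iff {c c' : W} (h : terW Imp2 c = terW Imp2 c') :
    ∀ s, (∃ n, itr c n = some (.inr s)) ↔ (∃ n, itr c' n = some (.inr s)) := by
  intro s
  rw [← terW_eq_some, ← terW_eq_some, h]

lemma terR_eq_some {p : P} {s t : Store} :
    terR Imp2 p s = some t ↔ ∃ n, itr (.run p s) n = some (.inr t) := by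
  show (cstR Imp2 p s).map Prod.snd = some t ↔ _
  rw [Option.map_eq_some_iff]
  constructor
  · rintro ⟨⟨n, u⟩, h1, h2⟩
    cases h2
    exact ⟨n, cstR_eq_some.mp h1⟩
  · rintro ⟨n, hn⟩
    exact ⟨(n, t), cstR_eq_some.mpr hn, rfl⟩
/-! ### Assembled congruence lemmas -/

lemma trcR_itr {p p' : P} (h : trcR Imp2 p = trcR Imp2 p') (s : Store) :
    itr (.run p s) = itr (.run p' s) := by
  rw [← trcR_eq, ← trcR_eq, h]

lemma cstR_ext_iff {p p' : P} (h : cstR Imp2 p = cstR Imp2 p') :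
    ∀ s n t, itr (.run p s) n = some (.inr t) ↔ itr (.run p' s) n = some (.inr t) := by
  intro s n t
  rw [← cstR_eq_some, ← cstR_eq_some, h]

lemma terR_ext_iff {p p' : P} (h : terR Imp2 p = terR Imp2 p') :
    ∀ s t, (∃ n, itr (.run p s) n = some (.inr t)) ↔
      (∃ n, itr (.run p' s) n = some (.inr t)) := by
  intro s t
  rw [← terR_eq_some, ← terR_eq_some, h]

lemma seq_ter {c : W} {q : P} {t : Store} :
    (∃ m, itr (.seqW c q) m = some (.inr t)) ↔
      ∃ s, (∃ n, itr c n = some (.inr s)) ∧ ∃ k, itr (.run q s) k = some (.inr t) := by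
  constructor
  · rintro ⟨m, hm⟩
    obtain ⟨n, s, k, h1, h2, -⟩ := (seq_inr m c q t).mp hm
    exact ⟨s, ⟨n, h1⟩, ⟨k, h2⟩⟩
  · rintro ⟨s, ⟨n, h1⟩, ⟨k, h2⟩⟩
    exact ⟨n + 1 + k, (seq_inr _ c q t).mpr ⟨n, s, k, h1, h2, rfl⟩⟩

lemma cst_while_fwd {e : Ex} {p p' : P}
    (h : ∀ s n u, itr (.run p s) n = some (.inr u) ↔ itr (.run p' s) n = some (.inr u)) :
    ∀ m s t, itr (.run (.whileE e p) s) m = some (.inr t) →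
      itr (.run (.whileE e p') s) m = some (.inr t) := by
  intro m
  induction m using Nat.strong_induction_on with
  | _ m ih =>
      intro s t hm
      rcases while_inr.mp hm with ⟨h0, hm0, ht⟩ | ⟨h0, n, u, k, h1, h2, h3⟩
      · exact while_inr.mpr (Or.inl ⟨h0, hm0, ht⟩)
      · exact while_inr.mpr (Or.inr ⟨h0, n, u, k, (h s n u).mp h1,
          ih k (by omega) u t h2, h3⟩)

lemma ter_while_fwd {e : Ex} {p p' : P}
    (h : ∀ s u, (∃ n, itr (.run p s) n = some (.inr u)) ↔
      (∃ n, itr (.run p' s) n = some (.inr u))) :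
    ∀ m s t, itr (.run (.whileE e p) s) m = some (.inr t) →
      ∃ m', itr (.run (.whileE e p') s) m' = some (.inr t) := by
  intro m
  induction m using Nat.strong_induction_on with
  | _ m ih =>
      intro s t hm
      rcases while_inr.mp hm with ⟨h0, hm0, ht⟩ | ⟨h0, n, u, k, h1, h2, h3⟩
      · exact ⟨0, while_inr.mpr (Or.inl ⟨h0, rfl, ht⟩)⟩
      · obtain ⟨n', hn'⟩ := (h s u).mp ⟨n, h1⟩
        obtain ⟨k', hk'⟩ := ih k (by omega) u t h2
        exact ⟨n' + 2 + k', while_inr.mpr (Or.inr ⟨h0, n', u, k', hn', hk', rfl⟩)⟩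

lemma trc_congruence :
    IsCongr (fun p p' => trcR Imp2 p = trcR Imp2 p')
      (fun c c' => trcW Imp2 c = trcW Imp2 c') := by
  refine ⟨?_, ?_, ?_, ?_, ?_, ?_⟩
  · -- reader seq
    intro p p' q q' hp hq
    funext s
    show trcW Imp2 (.seqW (.run p s) q) = trcW Imp2 (.seqW (.run p' s) q')
    rw [trcW_eq, trcW_eq]
    exact itr_seqW_congr _ _ (trcR_itr hp s) (trcR_itr hq)
  · -- while
    intro e p p' hp
    funext s
    rw [trcR_eq, trcR_eq]
    funext n
    exact itr_while_congr (fun s => trcR_itr hp s) n s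
  · -- run
    intro s p p' hp
    show trcW Imp2 (.run p s) = trcW Imp2 (.run p' s)
    rw [trcW_eq, trcW_eq]
    exact trcR_itr hp s
  · -- out
    intro s c c' hc
    rw [trcW_eq, trcW_eq] at hc ⊢
    funext n
    rw [itr_out, itr_out]
    cases n with
    | zero => rfl
    | succ n => exact congrFun hc n
  · intro s; rfl
  · -- seqW
    intro c c' q q' hc hq
    rw [trcW_eq, trcW_eq] at hc ⊢
    exact itr_seqW_congr _ _ hc (trcR_itr hq)

lemma cst_congruence :
    IsCongr (fun p p' => cstR Imp2 p = cstR Imp2 p')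
      (fun c c' => cstW Imp2 c = cstW Imp2 c') := by
  refine ⟨?_, ?_, ?_, ?_, ?_, ?_⟩
  · -- reader seq
    intro p p' q q' hp hq
    funext s
    show cstW Imp2 (.seqW (.run p s) q) = cstW Imp2 (.seqW (.run p' s) q')
    apply cstW_ext
    intro m t
    rw [seq_inr, seq_inr]
    constructor
    · rintro ⟨n, u, k, h1, h2, h3⟩
      exact ⟨n, u, k, (cstR_ext_iff hp s n u).mp h1, (cstR_ext_iff hq u k t).mp h2, h3⟩
    · rintro ⟨n, u, k, h1, h2, h3⟩
      exact ⟨n, u, k, (cstR_ext_iff hp s n u).mpr h1, (cstR_ext_iff hq u k t).mpr h2, h3⟩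
  · -- while
    intro e p p' hp
    funext s
    show cstW Imp2 (rstep2 (.whileE e p) s) = cstW Imp2 (rstep2 (.whileE e p') s)
    apply cstW_ext
    intro m t
    rw [itr_congr (c := rstep2 (.whileE e p) s) (c' := .run (.whileE e p) s)
        (by rw [obs_rstep]; rfl) m,
      itr_congr (c := rstep2 (.whileE e p') s) (c' := .run (.whileE e p') s)
        (by rw [obs_rstep]; rfl) m]
    exact ⟨cst_while_fwd (cstR_ext_iff hp) m s t,
      cst_while_fwd (fun s n u => (cstR_ext_iff hp s n u).symm) m s t⟩
  · -- run
    intro s p p' hp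
    apply cstW_ext
    intro n t
    exact cstR_ext_iff hp s n t
  · -- out
    intro s c c' hc
    apply cstW_ext
    intro m t
    rw [out_inr, out_inr]
    constructor
    · rintro ⟨k, h1, h2⟩; exact ⟨k, (cstW_ext_iff hc k t).mp h1, h2⟩
    · rintro ⟨k, h1, h2⟩; exact ⟨k, (cstW_ext_iff hc k t).mpr h1, h2⟩
  · intro s; rfl
  · -- seqW
    intro c c' q q' hc hq
    apply cstW_ext
    intro m t
    rw [seq_inr, seq_inr]
    constructor
    · rintro ⟨n, u, k, h1, h2, h3⟩
      exact ⟨n, u, k, (cstW_ext_iff hc n u).mp h1, (cstR_ext_iff hq u k t).mp h2, h3⟩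
    · rintro ⟨n, u, k, h1, h2, h3⟩
      exact ⟨n, u, k, (cstW_ext_iff hc n u).mpr h1, (cstR_ext_iff hq u k t).mpr h2, h3⟩

lemma ter_congruence :
    IsCongr (fun p p' => terR Imp2 p = terR Imp2 p')
      (fun c c' => terW Imp2 c = terW Imp2 c') := by
  refine ⟨?_, ?_, ?_, ?_, ?_, ?_⟩
  · -- reader seq
    intro p p' q q' hp hq
    funext s
    show terW Imp2 (.seqW (.run p s) q) = terW Imp2 (.seqW (.run p' s) q')
    apply terW_ext
    intro t
    rw [seq_ter, seq_ter]
    constructor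
    · rintro ⟨u, h1, h2⟩
      exact ⟨u, (terR_ext_iff hp s u).mp h1, (terR_ext_iff hq u t).mp h2⟩
    · rintro ⟨u, h1, h2⟩
      exact ⟨u, (terR_ext_iff hp s u).mpr h1, (terR_ext_iff hq u t).mpr h2⟩
  · -- while
    intro e p p' hp
    funext s
    show terW Imp2 (rstep2 (.whileE e p) s) = terW Imp2 (rstep2 (.whileE e p') s)
    apply terW_ext
    intro t
    constructor
    · rintro ⟨m, hm⟩
      rw [itr_congr (c := rstep2 (.whileE e p) s) (c' := .run (.whileE e p) s)
          (by rw [obs_rstep]; rfl) m] at hm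
      obtain ⟨m', hm'⟩ := ter_while_fwd (terR_ext_iff hp) m s t hm
      refine ⟨m', ?_⟩
      rwa [itr_congr (c := rstep2 (.whileE e p') s) (c' := .run (.whileE e p') s)
          (by rw [obs_rstep]; rfl) m']
    · rintro ⟨m, hm⟩
      rw [itr_congr (c := rstep2 (.whileE e p') s) (c' := .run (.whileE e p') s)
          (by rw [obs_rstep]; rfl) m] at hm
      obtain ⟨m', hm'⟩ := ter_while_fwd (fun s u => (terR_ext_iff hp s u).symm) m s t hm
      refine ⟨m', ?_⟩
      rwa [itr_congr (c := rstep2 (.whileE e p) s) (c' := .run (.whileE e p) s)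
          (by rw [obs_rstep]; rfl) m']
  · -- run
    intro s p p' hp
    apply terW_ext
    intro t
    exact terR_ext_iff hp s t
  · -- out
    intro s c c' hc
    apply terW_ext
    intro t
    constructor
    · rintro ⟨m, hm⟩
      obtain ⟨k, h1, -⟩ := out_inr.mp hm
      obtain ⟨k', hk'⟩ := (terW_ext_iff hc t).mp ⟨k, h1⟩
      exact ⟨k' + 1, out_inr.mpr ⟨k', hk', rfl⟩⟩
    · rintro ⟨m, hm⟩
      obtain ⟨k, h1, -⟩ := out_inr.mp hm
      obtain ⟨k', hk'⟩ := (terW_ext_iff hc t).mpr ⟨k, h1⟩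
      exact ⟨k' + 1, out_inr.mpr ⟨k', hk', rfl⟩⟩
  · intro s; rfl
  · -- seqW
    intro c c' q q' hc hq
    apply terW_ext
    intro t
    rw [seq_ter, seq_ter]
    constructor
    · rintro ⟨u, h1, h2⟩
      exact ⟨u, (terW_ext_iff hc u).mp h1, (terR_ext_iff hq u t).mp h2⟩
    · rintro ⟨u, h1, h2⟩
      exact ⟨u, (terW_ext_iff hc u).mpr h1, (terR_ext_iff hq u t).mpr h2⟩
/-- trace equivalence, cost equivalence and termination
equivalence are congruences on the operational model of Imp². -/
theorem imp2_congruence :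
    IsCongr (fun p p' => trcR Imp2 p = trcR Imp2 p')
      (fun c c' => trcW Imp2 c = trcW Imp2 c') ∧
    IsCongr (fun p p' => cstR Imp2 p = cstR Imp2 p')
      (fun c c' => cstW Imp2 c = cstW Imp2 c') ∧
    IsCongr (fun p p' => terR Imp2 p = terR Imp2 p')
      (fun c c' => terW Imp2 c = terW Imp2 c') :=
  ⟨trc_congruence, cst_congruence, ter_congruence⟩

end ImpLang
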